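/- Let f be a Fréchet differentiable pseudolinear function on an open convex set S in a real Banach space E. Then there exists a positive function p : S × S → (0,∞) such that f(y) − f(x) = p(x,y) · ⟨∇f(x), y − x⟩ for all x, y in S. -/

import Mathlib

open Filter Topology

def Pseudoconvex {E : Type*} [NormedAddCommGroup E] [NormedSpace ℝ E]
    (S : Set E) (f : E → ℝ) (f' : E → E →L[ℝ] ℝ) : Prop :=
  ∀ x ∈ S, ∀ y ∈ S, f y < f x → f' x (y - x) < 0

def Pseudolinear {E : Type*} [NormedAddCommGroup E] [NormedSpace ℝ E]
    (S : Set E) (f : E → ℝ) (f' : E → E →L[ℝ] ℝ) : Prop :=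
  Pseudoconvex S f f' ∧ Pseudoconvex S (fun x => -f x) (fun x => -(f' x))

lemma aux_le {E : Type*} [NormedAddCommGroup E] [NormedSpace ℝ E]
    {S : Set E} (hSc : Convex ℝ S)
    (f : E → ℝ) (f' : E → E →L[ℝ] ℝ)
    (hdiff : ∀ x ∈ S, HasFDerivAt f (f' x) x)
    (hpl : Pseudolinear S f f')
    {x y : E} (hx : x ∈ S) (hy : y ∈ S) (hfe : f y = f x) :
    f' x (y - x) ≤ 0 := by
  by_contra h
  push_neg at h
  set c : ℝ → E := fun t => x + t • (y - x) with hc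
  have hmem : ∀ t ∈ Set.Icc (0:ℝ) 1, c t ∈ S := by
    intro t ht
    have h1 := hSc hx hy (by linarith [ht.2] : (0:ℝ) ≤ 1 - t) ht.1 (by ring)
    have h2 : c t = (1 - t) • x + t • y := by
      simp [hc, sub_smul, smul_sub]; abel
    rw [h2]; exact h1
  set g : ℝ → ℝ := fun t => f (c t) with hg
  have hgd : ∀ t ∈ Set.Icc (0:ℝ) 1, HasDerivAt g (f' (c t) (y - x)) t := by
    intro t ht
    have hct : HasDerivAt c (y - x) t := by
      simpa [hc] using ((hasDerivAt_id t).smul_const (y - x)).const_add x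
    exact (hdiff (c t) (hmem t ht)).comp_hasDerivAt t hct
  have hcont : ContinuousOn g (Set.Icc 0 1) := fun t ht =>
    ((hgd t ht).continuousAt).continuousWithinAt
  -- derivative at 0 positive ⇒ ∃ s ∈ Ioo 0 1, g s > g 0
  have hg0 : HasDerivAt g (f' x (y - x)) 0 := by
    have := hgd 0 ⟨le_refl 0, zero_le_one⟩
    simpa [hc] using this
  obtain ⟨s, hs, hgs⟩ : ∃ s ∈ Set.Ioo (0:ℝ) 1, g 0 < g s := by
    have hslope := hasDerivAt_iff_tendsto_slope.1 hg0
    have hev : ∀ᶠ t in 𝓝[>] (0:ℝ), 0 < slope g 0 t :=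
      (hslope.mono_left (nhdsWithin_mono _ (by intro a ha; exact ne_of_gt ha))).eventually
        (eventually_gt_nhds h)
    have hev2 : ∀ᶠ t in 𝓝[>] (0:ℝ), t ∈ Set.Ioo (0:ℝ) 1 :=
      Ioo_mem_nhdsGT_of_mem ⟨le_refl 0, one_pos⟩
    obtain ⟨t, ht1, ht2⟩ := (hev.and hev2).exists
    refine ⟨t, ht2, ?_⟩
    have ht0 : (0:ℝ) < t := ht2.1
    have h3 : 0 < (g t - g 0) / t := by simpa [slope_def_field] using ht1
    have h4 := mul_pos h3 ht0
    rw [div_mul_cancel₀ _ ht0.ne'] at h4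
    linarith
  obtain ⟨t, htI, hmax⟩ := isCompact_Icc.exists_isMaxOn (Set.nonempty_Icc.2 zero_le_one) hcont
  have hg01 : g 1 = g 0 := by simp [hg, hc, hfe]
  have htmax : g s ≤ g t := hmax (Set.mem_Icc.2 ⟨hs.1.le, hs.2.le⟩)
  have ht0 : t ≠ 0 := by rintro rfl; linarith
  have ht1 : t ≠ 1 := by rintro rfl; rw [hg01] at htmax; linarith
  have htIoo : t ∈ Set.Ioo (0:ℝ) 1 := ⟨lt_of_le_of_ne htI.1 (Ne.symm ht0), lt_of_le_of_ne htI.2 ht1⟩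
  have hlocal : IsLocalMax g t := by
    have : Set.Icc (0:ℝ) 1 ∈ 𝓝 t := Icc_mem_nhds htIoo.1 htIoo.2
    exact Filter.eventually_of_mem this hmax
  have hderiv0 : f' (c t) (y - x) = 0 := hlocal.hasDerivAt_eq_zero (hgd t htI)
  -- now f x < f (c t), apply pseudoconvexity of f at c t with point x
  have hlt : f x < f (c t) := by
    have : g 0 < g t := lt_of_lt_of_le hgs htmax
    simpa [hg, hc] using this
  have := hpl.1 (c t) (hmem t htI) x hx hlt
  have hxc : x - c t = (-t) • (y - x) := by simp [hc]
  rw [hxc] at this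
  simp [hderiv0] at this

lemma aux_eq {E : Type*} [NormedAddCommGroup E] [NormedSpace ℝ E]
    {S : Set E} (hSc : Convex ℝ S)
    (f : E → ℝ) (f' : E → E →L[ℝ] ℝ)
    (hdiff : ∀ x ∈ S, HasFDerivAt f (f' x) x)
    (hpl : Pseudolinear S f f')
    {x y : E} (hx : x ∈ S) (hy : y ∈ S) (hfe : f y = f x) :
    f' x (y - x) = 0 := by
  refine le_antisymm (aux_le hSc f f' hdiff hpl hx hy hfe) ?_
  have hdiff' : ∀ z ∈ S, HasFDerivAt (fun w => -f w) (-(f' z)) z := fun z hz => (hdiff z hz).neg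
  have hpl' : Pseudolinear S (fun w => -f w) (fun w => -(f' w)) := by
    refine ⟨hpl.2, ?_⟩
    intro a ha b hb hlt
    simp only [neg_neg] at hlt ⊢
    exact hpl.1 a ha b hb hlt
  have := aux_le hSc _ _ hdiff' hpl' hx hy (by simp [hfe])
  simpa using this

theorem stmt_1 {E : Type*} [NormedAddCommGroup E] [NormedSpace ℝ E] [CompleteSpace E]
    {S : Set E} (hSo : IsOpen S) (hSc : Convex ℝ S)
    (f : E → ℝ) (f' : E → E →L[ℝ] ℝ)
    (hdiff : ∀ x ∈ S, HasFDerivAt f (f' x) x)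
    (hpl : Pseudolinear S f f') :
    ∃ p : E → E → ℝ, (∀ x ∈ S, ∀ y ∈ S, 0 < p x y) ∧
      ∀ x ∈ S, ∀ y ∈ S, f y - f x = p x y * f' x (y - x) := by
  refine ⟨fun x y => if f' x (y - x) = 0 then 1 else (f y - f x) / f' x (y - x), ?_, ?_⟩
  · intro x hx y hy
    by_cases h : f' x (y - x) = 0
    · simp [h]
    · simp only [h, if_false]
      rcases lt_trichotomy (f y) (f x) with hlt | heq | hgt
      · have hd := hpl.1 x hx y hy hlt
        exact div_pos_iff.2 (Or.inr ⟨by linarith, hd⟩)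
      · exact absurd (aux_eq hSc f f' hdiff hpl hx hy heq) h
      · have hd := hpl.2 x hx y hy (by simpa using hgt)
        simp only [ContinuousLinearMap.neg_apply, neg_neg, neg_lt_zero] at hd
        exact div_pos (by linarith) (by linarith [hd])
  · intro x hx y hy
    by_cases h : f' x (y - x) = 0
    · simp only [h, if_pos rfl, mul_zero]
      rcases lt_trichotomy (f y) (f x) with hlt | heq | hgt
      · have := hpl.1 x hx y hy hlt; rw [h] at this; linarith
      · linarith
      · have := hpl.2 x hx y hy (by simpa using hgt)
        simp only [ContinuousLinearMap.neg_apply, h] at this; linarith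
    · simp only [h, if_false]
      rw [div_mul_cancel₀ _ h]
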